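/- Let 1/2·I ⪯ Σ̂⁺_m ⪯ (1/γ)·I be i.i.d. random d×d matrices (0 < γ < 1/2) with mean Σ⁺ = E[Σ̂⁺_m], and suppose for a fixed matrix Σ with γI ⪯ Σ ⪯ I that ‖Σ⁺ − Σ⁻¹‖ ≤ ε where 0 < ε < 1/16. Let Σ̂⁺ = (1/M)∑_{m=1}^M Σ̂⁺_m and assume (8d/(γM))·log(3M/γ) < 1/8. Then E[Σ̂⁺ Σ Σ̂⁺] ⪯ 2·E[Σ̂⁺] + (3ε + (12d/(γM))·log(3M/γ))·I. -/

import Mathlib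

open MeasureTheory ProbabilityTheory Matrix Finset

instance matrixMeasurableSpace (n : ℕ) : MeasurableSpace (Matrix (Fin n) (Fin n) ℝ) :=
  MeasurableSpace.pi (X := fun _ : Fin n => Fin n → ℝ)

namespace Stmt7Aux

variable {d : ℕ}

lemma quad_nonneg {X : Matrix (Fin d) (Fin d) ℝ} (hX : X.PosSemidef) (v : Fin d → ℝ) :
    0 ≤ v ⬝ᵥ (X *ᵥ v) := by simpa using hX.dotProduct_mulVec_nonneg v

lemma herm_transpose {X : Matrix (Fin d) (Fin d) ℝ} (hX : X.IsHermitian) : Xᵀ = X := by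
  simpa [Matrix.IsHermitian, Matrix.conjTranspose_eq_transpose_of_trivial] using hX

lemma herm_of_shift {X : Matrix (Fin d) (Fin d) ℝ} {s : ℝ}
    (h : (X - s • (1 : Matrix (Fin d) (Fin d) ℝ)).IsHermitian) : Xᵀ = X := by
  have h2 := herm_transpose h
  have h3 : Xᵀ - s • (1 : Matrix (Fin d) (Fin d) ℝ) = X - s • 1 := by
    simpa [Matrix.transpose_sub, Matrix.transpose_smul] using h2
  have := congrArg (· + s • (1 : Matrix (Fin d) (Fin d) ℝ)) h3
  simpa [sub_add_cancel] using this

lemma dot_symm {E : Matrix (Fin d) (Fin d) ℝ} (hE : Eᵀ = E) (x y : Fin d → ℝ) :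
    x ⬝ᵥ (E *ᵥ y) = y ⬝ᵥ (E *ᵥ x) := by
  rw [Matrix.dotProduct_mulVec, ← Matrix.mulVec_transpose, hE]
  exact dotProduct_comm _ _

lemma quad_le {X : Matrix (Fin d) (Fin d) ℝ} {c : ℝ}
    (h : (c • (1 : Matrix (Fin d) (Fin d) ℝ) - X).PosSemidef) (v : Fin d → ℝ) :
    v ⬝ᵥ (X *ᵥ v) ≤ c * (v ⬝ᵥ v) := by
  have h0 := quad_nonneg h v
  rw [Matrix.sub_mulVec, Matrix.smul_mulVec, Matrix.one_mulVec, dotProduct_sub,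
    dotProduct_smul] at h0
  simp only [smul_eq_mul] at h0
  linarith

lemma quad_ge {X : Matrix (Fin d) (Fin d) ℝ} {c : ℝ}
    (h : (X - c • (1 : Matrix (Fin d) (Fin d) ℝ)).PosSemidef) (v : Fin d → ℝ) :
    c * (v ⬝ᵥ v) ≤ v ⬝ᵥ (X *ᵥ v) := by
  have h0 := quad_nonneg h v
  rw [Matrix.sub_mulVec, Matrix.smul_mulVec, Matrix.one_mulVec, dotProduct_sub,
    dotProduct_smul] at h0
  simp only [smul_eq_mul] at h0
  linarith

lemma smul_one_psd {c : ℝ} (hc : 0 ≤ c) :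
    (c • (1 : Matrix (Fin d) (Fin d) ℝ)).PosSemidef := by
  rw [Matrix.smul_one_eq_diagonal]
  exact Matrix.PosSemidef.diagonal fun _ => hc

lemma quad_sum (X : Matrix (Fin d) (Fin d) ℝ) (v : Fin d → ℝ) :
    v ⬝ᵥ (X *ᵥ v) = ∑ i, ∑ j, v i * X i j * v j := by
  simp [dotProduct, Matrix.mulVec, Finset.mul_sum, mul_assoc]

lemma triple_entry (X Y Z : Matrix (Fin d) (Fin d) ℝ) (i j : Fin d) :
    (X * Y * Z) i j = ∑ l, ∑ k, X i k * Y k l * Z l j := by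
  simp [Matrix.mul_apply, Finset.sum_mul]

lemma single_quad (X : Matrix (Fin d) (Fin d) ℝ) (i j : Fin d) :
    (Pi.single i (1:ℝ)) ⬝ᵥ (X *ᵥ Pi.single j (1:ℝ)) = X i j := by
  simp [Matrix.mulVec_single, single_dotProduct]

lemma entry_abs_le {X : Matrix (Fin d) (Fin d) ℝ} {c : ℝ}
    (hX : X.PosSemidef)
    (h : (c • (1 : Matrix (Fin d) (Fin d) ℝ) - X).PosSemidef) (i j : Fin d) :
    |X i j| ≤ c := by
  have hsymm : ∀ a b : Fin d, X a b = X b a := by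
    intro a b
    have := congrFun (congrFun (herm_transpose hX.1) a) b
    simpa [Matrix.transpose_apply] using this.symm
  have hdiag : ∀ a : Fin d, 0 ≤ X a a ∧ X a a ≤ c := by
    intro a
    constructor
    · simpa [single_quad] using quad_nonneg hX (Pi.single a 1)
    · have := quad_le h (Pi.single a (1:ℝ))
      simpa [single_quad, dotProduct_single, Pi.single_apply] using this
  rcases eq_or_ne i j with rfl | hij
  · rw [abs_le]; exact ⟨by linarith [(hdiag i).1, (hdiag i).2], (hdiag i).2⟩
  · have key : ∀ s : ℝ, s = 1 ∨ s = -1 →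
        X i i + s * X i j + s * X j i + s * s * X j j ≤ c * (1 + s * s) := by
      intro s hs
      have hq := quad_le h (Pi.single i (1:ℝ) + s • (Pi.single j (1:ℝ) : Fin d → ℝ))
      rw [Matrix.mulVec_add, Matrix.mulVec_smul, dotProduct_add, add_dotProduct,
        add_dotProduct, dotProduct_smul, smul_dotProduct, smul_dotProduct,
        dotProduct_smul] at hq
      simp only [smul_eq_mul, single_quad, dotProduct_single, single_dotProduct,
        Pi.single_apply, hij, hij.symm, if_neg, if_pos, mul_one, one_mul,
        smul_dotProduct, dotProduct_smul] at hq
      rcases hs with rfl | rfl <;>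
        simp [Pi.single_apply, hij, Ne.symm hij] at hq <;> nlinarith [hq]
    have k1 := key 1 (Or.inl rfl)
    have k2 := key (-1) (Or.inr rfl)
    rw [hsymm j i] at k1 k2
    rw [abs_le]
    constructor <;> nlinarith [(hdiag i).1, (hdiag j).1, (hdiag i).2, (hdiag j).2]

lemma sq_quad_le {X : Matrix (Fin d) (Fin d) ℝ} {c : ℝ} (hc : 0 < c) (hX : X.PosSemidef)
    (h : (c • (1 : Matrix (Fin d) (Fin d) ℝ) - X).PosSemidef) (v : Fin d → ℝ) :
    (X *ᵥ v) ⬝ᵥ (X *ᵥ v) ≤ c * (v ⬝ᵥ (X *ᵥ v)) := by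
  have hT := herm_transpose hX.1
  have h0 := quad_nonneg hX (v - c⁻¹ • (X *ᵥ v))
  have h1 : v ⬝ᵥ (X *ᵥ (X *ᵥ v)) = (X *ᵥ v) ⬝ᵥ (X *ᵥ v) := by
    rw [dot_symm hT]
  have h2 := quad_le h (X *ᵥ v)
  rw [Matrix.mulVec_sub, Matrix.mulVec_smul, dotProduct_sub, sub_dotProduct,
    sub_dotProduct, dotProduct_smul, smul_dotProduct, dotProduct_smul,
    smul_dotProduct] at h0
  simp only [smul_eq_mul, h1] at h0
  set s := (X *ᵥ v) ⬝ᵥ (X *ᵥ v) with hs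
  set t := (X *ᵥ v) ⬝ᵥ (X *ᵥ (X *ᵥ v)) with ht
  set a := v ⬝ᵥ (X *ᵥ v) with ha
  have e2 : c⁻¹ * t ≤ s := by
    have e2' : c⁻¹ * t ≤ c⁻¹ * (c * s) := mul_le_mul_of_nonneg_left h2 (by positivity)
    rwa [inv_mul_cancel_left₀ hc.ne'] at e2'
  have e1 : c⁻¹ * (c⁻¹ * t) ≤ c⁻¹ * s := mul_le_mul_of_nonneg_left e2 (by positivity)
  have e3 : c⁻¹ * s ≤ a := by linarith
  have e4 : c * (c⁻¹ * s) ≤ c * a := mul_le_mul_of_nonneg_left e3 hc.le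
  rwa [mul_inv_cancel_left₀ hc.ne'] at e4

end Stmt7Aux

open Stmt7Aux

set_option maxHeartbeats 2000000 in
/-- Second-moment bound for averaged inverse-covariance estimators: if the i.i.d. random
matrices `Σ̂⁺_m` satisfy `(1/2) I ⪯ Σ̂⁺_m ⪯ (1/γ) I` a.s., their mean `Σ⁺` is within `ε`
of `Σ⁻¹` in operator norm (expressed via quadratic forms) for a fixed `Σ` with
`γ I ⪯ Σ ⪯ I`, `0 < ε < 1/16`, `0 < γ < 1/2`, and `(8d/(γM)) log(3M/γ) < 1/8`, then
`E[Σ̂⁺ Σ Σ̂⁺] ⪯ 2 E[Σ̂⁺] + (3ε + (12d/(γM)) log(3M/γ)) I` for the empirical average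
`Σ̂⁺ = (1/M) ∑_m Σ̂⁺_m`. -/
theorem stmt_7 (d M : ℕ) (hM : 0 < M) (γ ε : ℝ)
    (hγ : 0 < γ) (hγ' : γ < 1 / 2) (hε : 0 < ε) (hε' : ε < 1 / 16)
    {Ω : Type*} [MeasurableSpace Ω] (P : Measure Ω) [IsProbabilityMeasure P]
    (A : Fin M → Ω → Matrix (Fin d) (Fin d) ℝ)
    (hmeas : ∀ m, Measurable (A m))
    (hindep : iIndepFun A P)
    (hident : ∀ m m', IdentDistrib (A m) (A m') P P)
    (hblock : ∀ m, ∀ᵐ ω ∂P,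
      (A m ω - (1 / 2 : ℝ) • (1 : Matrix (Fin d) (Fin d) ℝ)).PosSemidef ∧
      ((1 / γ) • (1 : Matrix (Fin d) (Fin d) ℝ) - A m ω).PosSemidef)
    (Sig : Matrix (Fin d) (Fin d) ℝ)
    (hSiglow : (Sig - γ • (1 : Matrix (Fin d) (Fin d) ℝ)).PosSemidef)
    (hSighigh : ((1 : Matrix (Fin d) (Fin d) ℝ) - Sig).PosSemidef)
    (Splus : Matrix (Fin d) (Fin d) ℝ)
    (hmean : ∀ m i j, (∫ ω, A m ω i j ∂P) = Splus i j)
    (hbias : ∀ v : Fin d → ℝ, |v ⬝ᵥ ((Splus - Sig⁻¹) *ᵥ v)| ≤ ε * (v ⬝ᵥ v))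
    (hMbig : (8 * d / (γ * M)) * Real.log (3 * M / γ) < 1 / 8)
    (EQ : Matrix (Fin d) (Fin d) ℝ)
    (hEQ : ∀ i j, EQ i j = ∫ ω,
      (((1 / (M : ℝ)) • ∑ m, A m ω) * Sig * ((1 / (M : ℝ)) • ∑ m, A m ω)) i j ∂P) :
    ((2 : ℝ) • Splus
      + (3 * ε + (12 * d / (γ * M)) * Real.log (3 * M / γ)) • (1 : Matrix (Fin d) (Fin d) ℝ)
      - EQ).PosSemidef := by
  classical
  have hMR : (0:ℝ) < M := by exact_mod_cast hM
  have hM1 : (1:ℝ) ≤ M := by exact_mod_cast hM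
  set m₀ : Fin M := ⟨0, hM⟩
  -- measurability of entries
  have hme : ∀ (m : Fin M) (i j : Fin d), Measurable (fun ω => A m ω i j) := by
    intro m i j
    exact ((measurable_pi_apply j).comp
      (measurable_pi_apply (X := fun _ : Fin d => Fin d → ℝ) i)).comp (hmeas m)
  -- a.e. good set
  have hgood : ∀ᵐ ω ∂P, ∀ m,
      (A m ω - (1 / 2 : ℝ) • (1 : Matrix (Fin d) (Fin d) ℝ)).PosSemidef ∧
      ((1 / γ) • (1 : Matrix (Fin d) (Fin d) ℝ) - A m ω).PosSemidef :=
    (MeasureTheory.ae_all_iff).2 hblock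
  -- pointwise consequences on the good set
  have hpsd_of : ∀ (X : Matrix (Fin d) (Fin d) ℝ),
      (X - (1 / 2 : ℝ) • (1 : Matrix (Fin d) (Fin d) ℝ)).PosSemidef → X.PosSemidef := by
    intro X h
    have heq : X = (X - (1/2 : ℝ) • (1 : Matrix (Fin d) (Fin d) ℝ)) + (1/2 : ℝ) • 1 := by
      abel
    rw [heq]
    exact h.add (smul_one_psd (by norm_num))
  -- integrability of entries
  have hbdd_int : ∀ (f : Ω → ℝ) (C : ℝ), Measurable f → (∀ᵐ ω ∂P, |f ω| ≤ C) →
      Integrable f P := by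
    intro f C hf hb
    refine Integrable.mono' (integrable_const C) hf.aestronglyMeasurable ?_
    simpa [Real.norm_eq_abs] using hb
  have hAbd : ∀ᵐ ω ∂P, ∀ m i j, |A m ω i j| ≤ 1/γ := by
    filter_upwards [hgood] with ω hω
    intro m i j
    exact entry_abs_le (hpsd_of _ (hω m).1) (hω m).2 i j
  have hAint : ∀ m i j, Integrable (fun ω => A m ω i j) P := by
    intro m i j
    refine hbdd_int _ (1/γ) (hme m i j) ?_
    filter_upwards [hAbd] with ω hω using hω m i j
  have hAAint : ∀ (m m' : Fin M) (i k l j : Fin d),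
      Integrable (fun ω => A m ω i k * A m' ω l j) P := by
    intro m m' i k l j
    refine hbdd_int _ ((1/γ) * (1/γ)) ((hme m i k).mul (hme m' l j)) ?_
    filter_upwards [hAbd] with ω hω
    rw [abs_mul]
    exact mul_le_mul (hω m i k) (hω m' l j) (abs_nonneg _) (by positivity)
  have hprod_int : ∀ (m m' : Fin M) (i k l j : Fin d),
      Integrable (fun ω => A m ω i k * Sig k l * A m' ω l j) P := by
    intro m m' i k l j
    have : (fun ω => A m ω i k * Sig k l * A m' ω l j)
        = fun ω => Sig k l * (A m ω i k * A m' ω l j) := by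
      funext ω; ring
    rw [this]
    exact (hAAint m m' i k l j).const_mul _
  have hentry_eq : ∀ (m m' : Fin M) (ω : Ω) (i j : Fin d),
      (A m ω * Sig * A m' ω) i j = ∑ l, ∑ k, A m ω i k * Sig k l * A m' ω l j := by
    intro m m' ω i j
    exact triple_entry _ _ _ i j
  have hentry_int : ∀ (m m' : Fin M) (i j : Fin d),
      Integrable (fun ω => (A m ω * Sig * A m' ω) i j) P := by
    intro m m' i j
    simp only [hentry_eq]
    exact integrable_finset_sum _ fun l _ => integrable_finset_sum _ fun k _ =>
      hprod_int m m' i k l j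
  -- Sig facts
  have hSigT : Sigᵀ = Sig := herm_of_shift hSiglow.1
  have hSigPSD : Sig.PosSemidef := by
    have heq : Sig = (Sig - γ • (1 : Matrix (Fin d) (Fin d) ℝ)) + γ • 1 := by abel
    rw [heq]
    exact hSiglow.add (smul_one_psd hγ.le)
  have hSighigh' : ((1:ℝ) • (1 : Matrix (Fin d) (Fin d) ℝ) - Sig).PosSemidef := by
    rw [one_smul]; exact hSighigh
  have hSigPD : Sig.PosDef := by
    refine Matrix.PosDef.of_dotProduct_mulVec_pos hSigPSD.1 fun v hv => ?_
    have h1 := quad_ge hSiglow v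
    have h2 : 0 < v ⬝ᵥ v := by
      have hnn : 0 ≤ v ⬝ᵥ v := Finset.sum_nonneg fun i _ => mul_self_nonneg _
      rcases lt_or_eq_of_le hnn with h | h
      · exact h
      · exact absurd (dotProduct_self_eq_zero.mp h.symm) hv
    calc (0:ℝ) < γ * (v ⬝ᵥ v) := by positivity
      _ ≤ v ⬝ᵥ (Sig *ᵥ v) := h1
      _ = star v ⬝ᵥ (Sig *ᵥ v) := by simp
  have hdet : IsUnit Sig.det := isUnit_iff_ne_zero.mpr hSigPD.det_pos.ne'
  have hSS : Sig⁻¹ * Sig = 1 := Matrix.nonsing_inv_mul _ hdet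
  have hSS' : Sig * Sig⁻¹ = 1 := Matrix.mul_nonsing_inv _ hdet
  have hSinvT : (Sig⁻¹)ᵀ = Sig⁻¹ := by rw [Matrix.transpose_nonsing_inv, hSigT]
  -- Splus symmetry
  have hSplus_symm : ∀ i j, Splus i j = Splus j i := by
    intro i j
    rw [← hmean m₀ i j, ← hmean m₀ j i]
    apply integral_congr_ae
    filter_upwards [hblock m₀] with ω hω
    have hAT := herm_of_shift hω.1.1
    simpa [Matrix.transpose_apply] using congrFun (congrFun hAT j) i
  have hSplusT : Splusᵀ = Splus := by
    ext i j; simp [Matrix.transpose_apply, hSplus_symm i j]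
  have hET : (Splus - Sig⁻¹)ᵀ = Splus - Sig⁻¹ := by
    rw [Matrix.transpose_sub, hSplusT, hSinvT]
  -- decomposition of Splus * Sig * Splus
  have hdecompS : Splus * Sig * Splus
      = Sig⁻¹ + (Splus - Sig⁻¹) + (Splus - Sig⁻¹)
        + (Splus - Sig⁻¹) * Sig * (Splus - Sig⁻¹) := by
    have h1 : Splus = Sig⁻¹ + (Splus - Sig⁻¹) := by abel
    conv_lhs => rw [h1]
    rw [add_mul, add_mul, mul_add, mul_add]
    rw [mul_assoc Sig⁻¹ Sig Sig⁻¹, hSS', mul_one]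
    rw [mul_assoc Sig⁻¹ Sig (Splus - Sig⁻¹)]
    rw [show Sig⁻¹ * (Sig * (Splus - Sig⁻¹)) = Splus - Sig⁻¹ from
      Matrix.nonsing_inv_mul_cancel_left _ _ hdet]
    rw [mul_assoc (Splus - Sig⁻¹) Sig Sig⁻¹, hSS', mul_one]
    abel
  -- EQ symmetry
  have hEQsymm : ∀ i j, EQ i j = EQ j i := by
    intro i j
    rw [hEQ i j, hEQ j i]
    apply integral_congr_ae
    filter_upwards [hgood] with ω hω
    have hAT : ∀ m, (A m ω)ᵀ = A m ω := fun m => herm_of_shift (hω m).1.1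
    have hCT : ((1/(M:ℝ)) • ∑ m, A m ω)ᵀ = (1/(M:ℝ)) • ∑ m, A m ω := by
      rw [Matrix.transpose_smul, Matrix.transpose_sum]
      congr 1
      exact Finset.sum_congr rfl fun m _ => hAT m
    have hFT : (((1/(M:ℝ)) • ∑ m, A m ω) * Sig * ((1/(M:ℝ)) • ∑ m, A m ω))ᵀ
        = ((1/(M:ℝ)) • ∑ m, A m ω) * Sig * ((1/(M:ℝ)) • ∑ m, A m ω) := by
      rw [Matrix.transpose_mul, Matrix.transpose_mul, hCT, hSigT, Matrix.mul_assoc]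
    simpa [Matrix.transpose_apply] using congrFun (congrFun hFT j) i
  -- the target matrix is symmetric
  have hHerm : ((2 : ℝ) • Splus
      + (3 * ε + (12 * d / (γ * M)) * Real.log (3 * M / γ)) • (1 : Matrix (Fin d) (Fin d) ℝ)
      - EQ).IsHermitian := by
    have hEQT : EQᵀ = EQ := by ext i j; simp [Matrix.transpose_apply, hEQsymm i j]
    have : ((2 : ℝ) • Splus
      + (3 * ε + (12 * d / (γ * M)) * Real.log (3 * M / γ)) • (1 : Matrix (Fin d) (Fin d) ℝ)
      - EQ)ᵀ = (2 : ℝ) • Splus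
      + (3 * ε + (12 * d / (γ * M)) * Real.log (3 * M / γ)) • (1 : Matrix (Fin d) (Fin d) ℝ)
      - EQ := by
      rw [Matrix.transpose_sub, Matrix.transpose_add, Matrix.transpose_smul,
        Matrix.transpose_smul, Matrix.transpose_one, hSplusT, hEQT]
    rw [Matrix.IsHermitian, Matrix.conjTranspose_eq_transpose_of_trivial]
    exact this
  refine Matrix.PosSemidef.of_dotProduct_mulVec_nonneg hHerm fun v => ?_
  rw [star_trivial]
  rcases Nat.eq_zero_or_pos d with hd0 | hd
  · subst hd0
    simp [dotProduct]
  -- main case : d ≥ 1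
  have hd1 : (1:ℝ) ≤ d := by exact_mod_cast hd
  have hgm0 : (0:ℝ) < γ * M := by positivity
  have hL1 : (1:ℝ) < Real.log (3 * M / γ) := by
    have h6 : (6:ℝ) < 3 * M / γ := by
      rw [lt_div_iff₀ hγ]; nlinarith
    have he := Real.exp_one_lt_d9
    calc (1:ℝ) = Real.log (Real.exp 1) := by rw [Real.log_exp]
      _ < Real.log (3 * M / γ) := Real.log_lt_log (Real.exp_pos 1) (by nlinarith)
  have hL0 : (0:ℝ) ≤ Real.log (3 * M / γ) := by linarith
  have hgm : (64:ℝ) < γ * M := by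
    have e1 : 8 / (γ * M) * Real.log (3 * M / γ)
        ≤ 8 * d / (γ * M) * Real.log (3 * M / γ) := by
      apply mul_le_mul_of_nonneg_right _ hL0
      apply (div_le_div_iff_of_pos_right hgm0).mpr
      nlinarith
    have e2 : 8 / (γ * M) ≤ 8 / (γ * M) * Real.log (3 * M / γ) :=
      le_mul_of_one_le_right (by positivity) hL1.le
    have e3 : 8 / (γ * M) < 1 / 8 := lt_of_le_of_lt (e2.trans e1) hMbig
    rw [div_lt_div_iff₀ hgm0 (by norm_num)] at e3
    linarith
  -- expand the quadratic form of the goal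
  rw [Matrix.sub_mulVec, Matrix.add_mulVec, Matrix.smul_mulVec,
    Matrix.smul_mulVec, Matrix.one_mulVec, dotProduct_sub, dotProduct_add,
    dotProduct_smul, dotProduct_smul]
  simp only [smul_eq_mul]
  have hn : 0 ≤ v ⬝ᵥ v := Finset.sum_nonneg fun i _ => mul_self_nonneg _
  -- integrability of quadratic forms
  have he_int : ∀ m m', Integrable (fun ω => v ⬝ᵥ ((A m ω * Sig * A m' ω) *ᵥ v)) P := by
    intro m m'
    simp only [quad_sum]
    exact integrable_finset_sum _ fun i _ => integrable_finset_sum _ fun j _ =>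
      ((hentry_int m m' i j).const_mul (v i)).mul_const (v j)
  have hAq_int : ∀ m, Integrable (fun ω => v ⬝ᵥ (A m ω *ᵥ v)) P := by
    intro m
    simp only [quad_sum]
    exact integrable_finset_sum _ fun i _ => integrable_finset_sum _ fun j _ =>
      ((hAint m i j).const_mul (v i)).mul_const (v j)
  have hAq_val : ∀ m, (∫ ω, v ⬝ᵥ (A m ω *ᵥ v) ∂P) = v ⬝ᵥ (Splus *ᵥ v) := by
    intro m
    simp only [quad_sum]
    rw [integral_finset_sum _ fun i _ => integrable_finset_sum _ fun j _ =>
      ((hAint m i j).const_mul (v i)).mul_const (v j)]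
    refine Finset.sum_congr rfl fun i _ => ?_
    rw [integral_finset_sum _ fun j _ => ((hAint m i j).const_mul (v i)).mul_const (v j)]
    refine Finset.sum_congr rfl fun j _ => ?_
    rw [MeasureTheory.integral_mul_const, MeasureTheory.integral_const_mul, hmean]
  have hp2 : (1/2 : ℝ) * (v ⬝ᵥ v) ≤ v ⬝ᵥ (Splus *ᵥ v) := by
    rw [← hAq_val m₀]
    have hconst : (1/2 : ℝ) * (v ⬝ᵥ v) = ∫ _ω, (1/2 : ℝ) * (v ⬝ᵥ v) ∂P := by simp
    rw [hconst]
    apply integral_mono_ae (integrable_const _) (hAq_int m₀)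
    filter_upwards [hblock m₀] with ω hω
    exact quad_ge hω.1 v
  have hp0 : 0 ≤ v ⬝ᵥ (Splus *ᵥ v) := le_trans (by linarith) hp2
  have hTsig : v ⬝ᵥ ((Splus * Sig * Splus) *ᵥ v)
      = (Splus *ᵥ v) ⬝ᵥ (Sig *ᵥ (Splus *ᵥ v)) := by
    conv_lhs => rw [← Matrix.mulVec_mulVec, ← Matrix.mulVec_mulVec, dot_symm hSplusT]
    exact dotProduct_comm _ _
  have hT0 : 0 ≤ v ⬝ᵥ ((Splus * Sig * Splus) *ᵥ v) := by
    rw [hTsig]; exact quad_nonneg hSigPSD _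
  -- bias bound
  have hbT : v ⬝ᵥ ((Splus * Sig * Splus) *ᵥ v)
      ≤ v ⬝ᵥ (Splus *ᵥ v) + ε * (v ⬝ᵥ v) + ε^2 * (v ⬝ᵥ v) := by
    set w := (Splus - Sig⁻¹) *ᵥ v with hw
    have ha := hbias v
    rw [← hw] at ha
    rw [abs_le] at ha
    have e1 : v ⬝ᵥ ((Splus - Sig⁻¹) *ᵥ w) = w ⬝ᵥ w := by
      rw [dot_symm hET, ← hw]
    have hs : w ⬝ᵥ w ≤ ε^2 * (v ⬝ᵥ v) := by
      have h1 := hbias (ε • v + w)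
      have h2 := hbias (ε • v - w)
      rw [abs_le] at h1 h2
      simp only [Matrix.mulVec_add, Matrix.mulVec_sub, Matrix.mulVec_smul,
        dotProduct_add, add_dotProduct, dotProduct_sub, sub_dotProduct,
        dotProduct_smul, smul_dotProduct, smul_eq_mul] at h1 h2
      rw [← hw] at h1 h2
      have e2 : w ⬝ᵥ w = w ⬝ᵥ w := rfl
      nlinarith [h1.2, h2.1, e1, hε]
    have hr : v ⬝ᵥ (((Splus - Sig⁻¹) * Sig * (Splus - Sig⁻¹)) *ᵥ v) ≤ w ⬝ᵥ w := by
      have hrw : ((Splus - Sig⁻¹) * Sig * (Splus - Sig⁻¹)) *ᵥ v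
          = (Splus - Sig⁻¹) *ᵥ (Sig *ᵥ w) := by
        rw [hw, Matrix.mulVec_mulVec, Matrix.mulVec_mulVec]
      rw [hrw, dot_symm hET, ← hw]
      conv_lhs => rw [dotProduct_comm]
      have := quad_le hSighigh' w
      simpa using this
    have hq1 : v ⬝ᵥ (Sig⁻¹ *ᵥ v) = v ⬝ᵥ (Splus *ᵥ v) - v ⬝ᵥ w := by
      have hsub : Sig⁻¹ = Splus - (Splus - Sig⁻¹) := by abel
      conv_lhs => rw [hsub]
      rw [Matrix.sub_mulVec, dotProduct_sub, hw]
    have hTexp : v ⬝ᵥ ((Splus * Sig * Splus) *ᵥ v)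
        = v ⬝ᵥ (Sig⁻¹ *ᵥ v) + v ⬝ᵥ w + v ⬝ᵥ w
          + v ⬝ᵥ (((Splus - Sig⁻¹) * Sig * (Splus - Sig⁻¹)) *ᵥ v) := by
      conv_lhs => rw [hdecompS]
      rw [Matrix.add_mulVec, Matrix.add_mulVec, Matrix.add_mulVec, dotProduct_add,
        dotProduct_add, dotProduct_add, hw]
    linarith [hs, hr, hq1, hTexp, ha.1, ha.2]
  -- diagonal terms
  have hdiag_le : ∀ m, (∫ ω, v ⬝ᵥ ((A m ω * Sig * A m ω) *ᵥ v) ∂P)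
      ≤ (1/γ) * (v ⬝ᵥ (Splus *ᵥ v)) := by
    intro m
    have hb : ∀ᵐ ω ∂P, v ⬝ᵥ ((A m ω * Sig * A m ω) *ᵥ v)
        ≤ (1/γ) * (v ⬝ᵥ (A m ω *ᵥ v)) := by
      filter_upwards [hgood] with ω hω
      have hpsd := hpsd_of _ (hω m).1
      have hAT := herm_of_shift (hω m).1.1
      have h1 : v ⬝ᵥ ((A m ω * Sig * A m ω) *ᵥ v)
          = (A m ω *ᵥ v) ⬝ᵥ (Sig *ᵥ (A m ω *ᵥ v)) := by
        conv_lhs => rw [← Matrix.mulVec_mulVec, ← Matrix.mulVec_mulVec, dot_symm hAT]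
        exact dotProduct_comm _ _
      have h2 := quad_le hSighigh' (A m ω *ᵥ v)
      have h3 := sq_quad_le (by positivity : (0:ℝ) < 1/γ) hpsd (hω m).2 v
      rw [h1]
      calc (A m ω *ᵥ v) ⬝ᵥ (Sig *ᵥ (A m ω *ᵥ v))
          ≤ 1 * ((A m ω *ᵥ v) ⬝ᵥ (A m ω *ᵥ v)) := h2
        _ ≤ (1/γ) * (v ⬝ᵥ (A m ω *ᵥ v)) := by rw [one_mul]; exact h3
    calc (∫ ω, v ⬝ᵥ ((A m ω * Sig * A m ω) *ᵥ v) ∂P)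
        ≤ ∫ ω, (1/γ) * (v ⬝ᵥ (A m ω *ᵥ v)) ∂P :=
          integral_mono_ae (he_int m m) ((hAq_int m).const_mul _) hb
      _ = (1/γ) * (v ⬝ᵥ (Splus *ᵥ v)) := by
          rw [MeasureTheory.integral_const_mul, hAq_val]
  -- off-diagonal terms
  have hoff : ∀ m m', m ≠ m' → (∫ ω, v ⬝ᵥ ((A m ω * Sig * A m' ω) *ᵥ v) ∂P)
      = v ⬝ᵥ ((Splus * Sig * Splus) *ᵥ v) := by
    intro m m' hmm'
    have hfac : ∀ i k l j : Fin d,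
        (∫ ω, A m ω i k * A m' ω l j ∂P) = Splus i k * Splus l j := by
      intro i k l j
      have hind : IndepFun (fun ω => A m ω i k) (fun ω => A m' ω l j) P :=
        (hindep.indepFun hmm').comp
          ((measurable_pi_apply k).comp
            (measurable_pi_apply (X := fun _ : Fin d => Fin d → ℝ) i))
          ((measurable_pi_apply j).comp
            (measurable_pi_apply (X := fun _ : Fin d => Fin d → ℝ) l))
      have h := IndepFun.integral_mul_eq_mul_integral hind
        (hAint m i k).aestronglyMeasurable (hAint m' l j).aestronglyMeasurable
      rw [← hmean m i k, ← hmean m' l j]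
      exact h
    have hptw : ∀ ω : Ω, v ⬝ᵥ ((A m ω * Sig * A m' ω) *ᵥ v)
        = ∑ i, ∑ j, ∑ l, ∑ k, (v i * v j * Sig k l) * (A m ω i k * A m' ω l j) := by
      intro ω
      rw [quad_sum]
      simp only [hentry_eq, Finset.sum_mul, Finset.mul_sum]
      exact Finset.sum_congr rfl fun i _ => Finset.sum_congr rfl fun j _ =>
        Finset.sum_congr rfl fun l _ => Finset.sum_congr rfl fun k _ => by ring
    have hint4 : ∀ i k l j : Fin d,
        Integrable (fun ω => (v i * v j * Sig k l) * (A m ω i k * A m' ω l j)) P :=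
      fun i k l j => (hAAint m m' i k l j).const_mul _
    calc (∫ ω, v ⬝ᵥ ((A m ω * Sig * A m' ω) *ᵥ v) ∂P)
        = ∑ i, ∑ j, ∑ l, ∑ k, (v i * v j * Sig k l) * (Splus i k * Splus l j) := by
          simp only [hptw]
          rw [integral_finset_sum _ fun i _ => integrable_finset_sum _ fun j _ =>
            integrable_finset_sum _ fun l _ => integrable_finset_sum _ fun k _ => hint4 i k l j]
          refine Finset.sum_congr rfl fun i _ => ?_
          rw [integral_finset_sum _ fun j _ =>
            integrable_finset_sum _ fun l _ => integrable_finset_sum _ fun k _ => hint4 i k l j]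
          refine Finset.sum_congr rfl fun j _ => ?_
          rw [integral_finset_sum _ fun l _ => integrable_finset_sum _ fun k _ => hint4 i k l j]
          refine Finset.sum_congr rfl fun l _ => ?_
          rw [integral_finset_sum _ fun k _ => hint4 i k l j]
          refine Finset.sum_congr rfl fun k _ => ?_
          rw [MeasureTheory.integral_const_mul, hfac]
      _ = v ⬝ᵥ ((Splus * Sig * Splus) *ᵥ v) := by
          conv_rhs => rw [quad_sum]
          simp only [triple_entry, Finset.sum_mul, Finset.mul_sum]
          exact Finset.sum_congr rfl fun i _ => Finset.sum_congr rfl fun j _ =>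
            Finset.sum_congr rfl fun l _ => Finset.sum_congr rfl fun k _ => by ring
  -- the expectation of the quadratic form of the average
  have hqEQ : v ⬝ᵥ (EQ *ᵥ v) = (1/(M:ℝ))^2 * ∑ m, ∑ m',
      (∫ ω, v ⬝ᵥ ((A m ω * Sig * A m' ω) *ᵥ v) ∂P) := by
    have hEQ' : ∀ i j, EQ i j
        = (1/(M:ℝ))^2 * ∑ m, ∑ m', (∫ ω, (A m ω * Sig * A m' ω) i j ∂P) := by
      intro i j
      rw [hEQ i j]
      have hptw : ∀ ω : Ω,
          (((1/(M:ℝ)) • ∑ m, A m ω) * Sig * ((1/(M:ℝ)) • ∑ m, A m ω)) i j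
          = (1/(M:ℝ))^2 * ∑ m, ∑ m', (A m ω * Sig * A m' ω) i j := by
        intro ω
        have hmat : ((1/(M:ℝ)) • ∑ m, A m ω) * Sig * ((1/(M:ℝ)) • ∑ m, A m ω)
            = (1/(M:ℝ))^2 • ∑ m, ∑ m', (A m ω * Sig * A m' ω) := by
          rw [Matrix.smul_mul, Matrix.mul_smul, Matrix.smul_mul, smul_smul, ← pow_two]
          congr 1
          rw [Finset.sum_mul, Finset.sum_mul]
          exact Finset.sum_congr rfl fun m _ => Finset.mul_sum _ _ _
        rw [hmat]
        simp [Matrix.smul_apply, Matrix.sum_apply, smul_eq_mul]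
      simp only [hptw]
      rw [MeasureTheory.integral_const_mul]
      congr 1
      rw [integral_finset_sum _ fun m _ => integrable_finset_sum _ fun m' _ =>
        hentry_int m m' i j]
      exact Finset.sum_congr rfl fun m _ =>
        integral_finset_sum _ fun m' _ => hentry_int m m' i j
    have hInt : ∀ m m', (∫ ω, v ⬝ᵥ ((A m ω * Sig * A m' ω) *ᵥ v) ∂P)
        = ∑ i, ∑ j, v i * (∫ ω, (A m ω * Sig * A m' ω) i j ∂P) * v j := by
      intro m m'
      simp only [quad_sum]
      rw [integral_finset_sum _ fun i _ => integrable_finset_sum _ fun j _ =>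
        ((hentry_int m m' i j).const_mul (v i)).mul_const (v j)]
      refine Finset.sum_congr rfl fun i _ => ?_
      rw [integral_finset_sum _ fun j _ =>
        ((hentry_int m m' i j).const_mul (v i)).mul_const (v j)]
      refine Finset.sum_congr rfl fun j _ => ?_
      rw [MeasureTheory.integral_mul_const, MeasureTheory.integral_const_mul]
    rw [quad_sum]
    simp only [hEQ', hInt]
    have swap4 : ∀ (g : Fin d → Fin d → Fin M → Fin M → ℝ),
        ∑ i, ∑ j, ∑ m, ∑ m', g i j m m' = ∑ m, ∑ m', ∑ i, ∑ j, g i j m m' := by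
      intro g
      calc ∑ i, ∑ j, ∑ m, ∑ m', g i j m m'
          = ∑ i, ∑ m, ∑ j, ∑ m', g i j m m' :=
            Finset.sum_congr rfl fun i _ => Finset.sum_comm
        _ = ∑ m, ∑ i, ∑ j, ∑ m', g i j m m' := Finset.sum_comm
        _ = ∑ m, ∑ i, ∑ m', ∑ j, g i j m m' :=
            Finset.sum_congr rfl fun m _ => Finset.sum_congr rfl fun i _ =>
              Finset.sum_comm
        _ = ∑ m, ∑ m', ∑ i, ∑ j, g i j m m' :=
            Finset.sum_congr rfl fun m _ => Finset.sum_comm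
    calc ∑ i, ∑ j, v i * ((1/(M:ℝ))^2
            * ∑ m, ∑ m', (∫ ω, (A m ω * Sig * A m' ω) i j ∂P)) * v j
        = ∑ i, ∑ j, ∑ m, ∑ m', (1/(M:ℝ))^2
            * (v i * (∫ ω, (A m ω * Sig * A m' ω) i j ∂P) * v j) := by
          refine Finset.sum_congr rfl fun i _ => Finset.sum_congr rfl fun j _ => ?_
          simp only [Finset.mul_sum, Finset.sum_mul]
          exact Finset.sum_congr rfl fun m _ => Finset.sum_congr rfl fun m' _ => by ring
      _ = ∑ m, ∑ m', ∑ i, ∑ j, (1/(M:ℝ))^2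
            * (v i * (∫ ω, (A m ω * Sig * A m' ω) i j ∂P) * v j) := swap4 _
      _ = (1/(M:ℝ))^2 * ∑ m, ∑ m', ∑ i, ∑ j,
            v i * (∫ ω, (A m ω * Sig * A m' ω) i j ∂P) * v j := by
          simp only [Finset.mul_sum]
  -- row sums
  have hsumB : ∑ m, ∑ m', (∫ ω, v ⬝ᵥ ((A m ω * Sig * A m' ω) *ᵥ v) ∂P)
      ≤ (M:ℝ) * ((1/γ) * (v ⬝ᵥ (Splus *ᵥ v))
        + ((M:ℝ) - 1) * (v ⬝ᵥ ((Splus * Sig * Splus) *ᵥ v))) := by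
    have hrow : ∀ m, ∑ m', (∫ ω, v ⬝ᵥ ((A m ω * Sig * A m' ω) *ᵥ v) ∂P)
        ≤ (1/γ) * (v ⬝ᵥ (Splus *ᵥ v))
          + ((M:ℝ) - 1) * (v ⬝ᵥ ((Splus * Sig * Splus) *ᵥ v)) := by
      intro m
      rw [← Finset.sum_erase_add _ _ (Finset.mem_univ m)]
      have h1 : ∑ m' ∈ Finset.univ.erase m,
          (∫ ω, v ⬝ᵥ ((A m ω * Sig * A m' ω) *ᵥ v) ∂P)
          = ((M:ℝ) - 1) * (v ⬝ᵥ ((Splus * Sig * Splus) *ᵥ v)) := by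
        rw [Finset.sum_congr rfl (fun m' hm' => hoff m m' (Ne.symm (Finset.mem_erase.mp hm').1))]
        rw [Finset.sum_const, Finset.card_erase_of_mem (Finset.mem_univ m), Finset.card_univ,
          Fintype.card_fin, nsmul_eq_mul]
        congr 1
        rw [Nat.cast_sub hM]
        norm_num
      rw [h1]
      linarith [hdiag_le m]
    calc ∑ m, ∑ m', (∫ ω, v ⬝ᵥ ((A m ω * Sig * A m' ω) *ᵥ v) ∂P)
        ≤ ∑ _m : Fin M, ((1/γ) * (v ⬝ᵥ (Splus *ᵥ v))
            + ((M:ℝ) - 1) * (v ⬝ᵥ ((Splus * Sig * Splus) *ᵥ v))) :=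
          Finset.sum_le_sum fun m _ => hrow m
      _ = (M:ℝ) * ((1/γ) * (v ⬝ᵥ (Splus *ᵥ v))
            + ((M:ℝ) - 1) * (v ⬝ᵥ ((Splus * Sig * Splus) *ᵥ v))) := by
          rw [Finset.sum_const, Finset.card_univ, Fintype.card_fin, nsmul_eq_mul]
  have hqEQle : v ⬝ᵥ (EQ *ᵥ v) ≤ v ⬝ᵥ ((Splus * Sig * Splus) *ᵥ v)
      + (1/(γ * M)) * (v ⬝ᵥ (Splus *ᵥ v)) := by
    rw [hqEQ]
    have step := mul_le_mul_of_nonneg_left hsumB (by positivity : (0:ℝ) ≤ (1/(M:ℝ))^2)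
    have heq2 : (1/(M:ℝ))^2 * ((M:ℝ) * ((1/γ) * (v ⬝ᵥ (Splus *ᵥ v))
        + ((M:ℝ) - 1) * (v ⬝ᵥ ((Splus * Sig * Splus) *ᵥ v))))
        = (1 - 1/(M:ℝ)) * (v ⬝ᵥ ((Splus * Sig * Splus) *ᵥ v))
          + (1/(γ * M)) * (v ⬝ᵥ (Splus *ᵥ v)) := by
      field_simp
      ring
    have hfin : (1 - 1/(M:ℝ)) * (v ⬝ᵥ ((Splus * Sig * Splus) *ᵥ v))
        ≤ v ⬝ᵥ ((Splus * Sig * Splus) *ᵥ v) := by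
      nlinarith [hT0, mul_nonneg (le_of_lt (by positivity : (0:ℝ) < 1/(M:ℝ))) hT0]
    calc (1/(M:ℝ))^2 * ∑ m, ∑ m', (∫ ω, v ⬝ᵥ ((A m ω * Sig * A m' ω) *ᵥ v) ∂P)
        ≤ (1/(M:ℝ))^2 * ((M:ℝ) * ((1/γ) * (v ⬝ᵥ (Splus *ᵥ v))
            + ((M:ℝ) - 1) * (v ⬝ᵥ ((Splus * Sig * Splus) *ᵥ v)))) := step
      _ = (1 - 1/(M:ℝ)) * (v ⬝ᵥ ((Splus * Sig * Splus) *ᵥ v))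
            + (1/(γ * M)) * (v ⬝ᵥ (Splus *ᵥ v)) := heq2
      _ ≤ v ⬝ᵥ ((Splus * Sig * Splus) *ᵥ v) + (1/(γ * M)) * (v ⬝ᵥ (Splus *ᵥ v)) := by
          linarith [hfin]
  -- final arithmetic
  have hrr : 1/(γ * M) ≤ 1/64 := by
    rw [div_le_div_iff₀ hgm0 (by norm_num)]
    linarith
  have harr1 : 1/(γ * M) * (v ⬝ᵥ (Splus *ᵥ v)) ≤ 1/64 * (v ⬝ᵥ (Splus *ᵥ v)) :=
    mul_le_mul_of_nonneg_right hrr hp0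
  have harr2 : ε^2 * (v ⬝ᵥ v) ≤ 1/256 * (v ⬝ᵥ v) :=
    mul_le_mul_of_nonneg_right (by nlinarith) hn
  have hKn : 0 ≤ (12 * d / (γ * M) * Real.log (3 * M / γ)) * (v ⬝ᵥ v) :=
    mul_nonneg (mul_nonneg (div_nonneg (by positivity) hgm0.le) hL0) hn
  have hen : 0 ≤ ε * (v ⬝ᵥ v) := mul_nonneg hε.le hn
  nlinarith [hqEQle, hbT, hp2, hn, harr1, harr2, hKn, hen]
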